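/- arXiv:1905.09585 — 4 statements merged into one kernel-verified Lean document; each statement's English description precedes it below -/
import Mathlib

section
/- Let S be a real m×m matrix and K = [[S*, Sᵀ],[S, S*]]. If (a₁, a₂) ∈ ℝ^{2m} is an eigenvector of K with eigenvalue λ ≠ 0, then |a₁| = |a₂|. -/
open Matrix

/-- The block matrix K = [[S*, Sᵀ],[S, S*]] built from a square matrix S,
where S* = (S + Sᵀ)/2 is the symmetric part. -/
noncomputable def Kmat {m : ℕ} (S : Matrix (Fin m) (Fin m) ℝ) :
    Matrix (Fin m ⊕ Fin m) (Fin m ⊕ Fin m) ℝ :=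
  Matrix.fromBlocks ((1 / 2 : ℝ) • (S + Sᵀ)) Sᵀ S ((1 / 2 : ℝ) • (S + Sᵀ))

/-- Quadratic form of K evaluated on the concatenated vector (a₁, a₂). -/
noncomputable def quadK {m : ℕ} (S : Matrix (Fin m) (Fin m) ℝ)
    (a₁ a₂ : Fin m → ℝ) : ℝ :=
  Kmat S *ᵥ Sum.elim a₁ a₂ ⬝ᵥ Sum.elim a₁ a₂

/-- Euclidean norm of a vector in ℝᵐ. -/
noncomputable def vecEnorm {m : ℕ} (a : Fin m → ℝ) : ℝ :=
  Real.sqrt (a ⬝ᵥ a)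

lemma transpose_mulVec_dot {m : ℕ} (S : Matrix (Fin m) (Fin m) ℝ)
    (x y : Fin m → ℝ) : (Sᵀ *ᵥ x) ⬝ᵥ y = (S *ᵥ y) ⬝ᵥ x := by
  rw [Matrix.mulVec_transpose, ← Matrix.dotProduct_mulVec, dotProduct_comm]

theorem stmt4 {m : ℕ} (S : Matrix (Fin m) (Fin m) ℝ) (a₁ a₂ : Fin m → ℝ)
    (lam : ℝ) (hv : Sum.elim a₁ a₂ ≠ 0)
    (heig : Kmat S *ᵥ Sum.elim a₁ a₂ = lam • Sum.elim a₁ a₂)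
    (hlam : lam ≠ 0) :
    vecEnorm a₁ = vecEnorm a₂ := by
  rw [Kmat, Matrix.fromBlocks_mulVec] at heig
  have h1 : ((1 / 2 : ℝ) • (S + Sᵀ)) *ᵥ a₁ + Sᵀ *ᵥ a₂ = lam • a₁ := by
    funext i
    have := congrFun heig (Sum.inl i)
    simpa only [Sum.elim_inl, Pi.add_apply, Pi.smul_apply, Function.comp_apply,
      Sum.elim_comp_inl, Sum.elim_comp_inr] using this
  have h2 : S *ᵥ a₁ + ((1 / 2 : ℝ) • (S + Sᵀ)) *ᵥ a₂ = lam • a₂ := by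
    funext i
    have := congrFun heig (Sum.inr i)
    simpa only [Sum.elim_inr, Pi.add_apply, Pi.smul_apply, Function.comp_apply,
      Sum.elim_comp_inl, Sum.elim_comp_inr] using this
  have E : ∀ y : Fin m → ℝ,
      ((((1 / 2 : ℝ) • (S + Sᵀ)) *ᵥ a₁ + Sᵀ *ᵥ a₂) ⬝ᵥ y = (lam • a₁) ⬝ᵥ y)
      ∧ ((S *ᵥ a₁ + ((1 / 2 : ℝ) • (S + Sᵀ)) *ᵥ a₂) ⬝ᵥ y = (lam • a₂) ⬝ᵥ y) := by
    intro y
    rw [h1, h2]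
    exact ⟨rfl, rfl⟩
  have E1 := (E a₁).1
  have E2 := (E a₂).2
  have E3 := (E a₂).1
  have E4 := (E a₁).2
  simp only [Matrix.smul_mulVec, Matrix.add_mulVec, add_dotProduct,
    smul_dotProduct, smul_eq_mul, transpose_mulVec_dot,
    dotProduct_comm a₂ a₁] at E1 E2 E3 E4
  have hnn : lam * (a₁ ⬝ᵥ a₁) = lam * (a₂ ⬝ᵥ a₂) := by linarith
  have key : a₁ ⬝ᵥ a₁ = a₂ ⬝ᵥ a₂ := mul_left_cancel₀ hlam hnn
  rw [vecEnorm, vecEnorm, key]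
end

section
/- Let S be a real m×m matrix and K = [[S*, Sᵀ],[S, S*]]. If (a₁, a₂) is an eigenvector of K with eigenvalue λ, then S a₁·a₁ = S a₂·a₂. -/
open Matrix

/-- Euclidean norm of a vector in ℝᵐ. -/
noncomputable def enorm {m : ℕ} (a : Fin m → ℝ) : ℝ :=
  Real.sqrt (a ⬝ᵥ a)

lemma key {m : ℕ} (A : Matrix (Fin m) (Fin m) ℝ) (x y : Fin m → ℝ) :
    (A *ᵥ x) ⬝ᵥ y = (Aᵀ *ᵥ y) ⬝ᵥ x := by
  rw [dotProduct_comm, dotProduct_mulVec, ← mulVec_transpose]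

theorem stmt5 {m : ℕ} (S : Matrix (Fin m) (Fin m) ℝ) (a₁ a₂ : Fin m → ℝ)
    (lam : ℝ) (hv : Sum.elim a₁ a₂ ≠ 0)
    (heig : Kmat S *ᵥ Sum.elim a₁ a₂ = lam • Sum.elim a₁ a₂) :
    S *ᵥ a₁ ⬝ᵥ a₁ = S *ᵥ a₂ ⬝ᵥ a₂ := by
  rw [Kmat, fromBlocks_mulVec] at heig
  have h1 : ((1 / 2 : ℝ) • (S + Sᵀ)) *ᵥ a₁ + Sᵀ *ᵥ a₂ = lam • a₁ := by
    funext i; exact congrFun heig (Sum.inl i)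
  have h2 : S *ᵥ a₁ + ((1 / 2 : ℝ) • (S + Sᵀ)) *ᵥ a₂ = lam • a₂ := by
    funext i; exact congrFun heig (Sum.inr i)
  have d1 := congrArg (fun v => v ⬝ᵥ a₂) h1
  have d2 := congrArg (fun v => v ⬝ᵥ a₁) h2
  simp only [add_dotProduct, smul_dotProduct, smul_mulVec, add_mulVec,
    smul_dotProduct] at d1 d2
  rw [key Sᵀ a₁ a₂, key Sᵀ a₂ a₂] at d1
  rw [key Sᵀ a₂ a₁] at d2
  simp only [transpose_transpose] at d1 d2
  rw [dotProduct_comm a₂ a₁] at d2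
  simp only [smul_eq_mul] at d1 d2
  linarith
end

section
/- Let S be a real m×m matrix. If every eigenvector a of SᵀS with positive eigenvalue λ² satisfies S a = λ a (where λ = |Sa| > 0), and SᵀS a = 0 implies S a = 0, then S is symmetric. -/
open Matrix
open RealInnerProductSpace

theorem stmt10 {m : ℕ} (S : Matrix (Fin m) (Fin m) ℝ)
    (hpos : ∀ (lam : ℝ) (a : Fin m → ℝ), 0 < lam →
      (Sᵀ * S) *ᵥ a = (lam ^ 2) • a → S *ᵥ a = lam • a)
    (hker : ∀ a : Fin m → ℝ, (Sᵀ * S) *ᵥ a = 0 → S *ᵥ a = 0) :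
    Sᵀ = S := by
  have hA : (Sᵀ * S).IsHermitian := by
    have := isHermitian_conjTranspose_mul_self S
    rwa [conjTranspose_eq_transpose_of_trivial] at this
  have hμ0 : ∀ i, 0 ≤ hA.eigenvalues i := by
    intro i
    have hps : (Sᵀ * S).PosSemidef := by
      have := posSemidef_conjTranspose_mul_self S
      rwa [conjTranspose_eq_transpose_of_trivial] at this
    exact hps.eigenvalues_nonneg i
  have hS : ∀ i, S *ᵥ ⇑(hA.eigenvectorBasis i) =
      Real.sqrt (hA.eigenvalues i) • ⇑(hA.eigenvectorBasis i) := by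
    intro i
    have hAv := hA.mulVec_eigenvectorBasis i
    rcases (hμ0 i).lt_or_eq with h | h
    · exact hpos _ _ (Real.sqrt_pos.mpr h) (by rwa [Real.sq_sqrt (hμ0 i)])
    · have h0 : Real.sqrt (hA.eigenvalues i) = 0 := by rw [← h, Real.sqrt_zero]
      rw [h0, zero_smul]
      exact hker _ (by rw [hAv, ← h, zero_smul])
  have hdot : ∀ i j, ⇑(hA.eigenvectorBasis i) ⬝ᵥ ⇑(hA.eigenvectorBasis j) =
      if i = j then 1 else 0 := by
    intro i j
    have := orthonormal_iff_ite.mp hA.eigenvectorBasis.orthonormal i j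
    rw [PiLp.inner_apply] at this
    simpa [dotProduct, mul_comm] using this
  have hST : ∀ i, Sᵀ *ᵥ ⇑(hA.eigenvectorBasis i) =
      Real.sqrt (hA.eigenvalues i) • ⇑(hA.eigenvectorBasis i) := by
    intro i
    have key : ∀ j, (Sᵀ *ᵥ ⇑(hA.eigenvectorBasis i)) ⬝ᵥ ⇑(hA.eigenvectorBasis j)
        = (Real.sqrt (hA.eigenvalues i) • ⇑(hA.eigenvectorBasis i)) ⬝ᵥ ⇑(hA.eigenvectorBasis j) := by
      intro j
      rw [mulVec_transpose, ← dotProduct_mulVec, hS j, dotProduct_smul, smul_dotProduct, hdot]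
      by_cases hij : i = j
      · subst hij; simp
      · simp [hij]
    have hdiff : ∀ j, ((Sᵀ *ᵥ ⇑(hA.eigenvectorBasis i)
        - Real.sqrt (hA.eigenvalues i) • ⇑(hA.eigenvectorBasis i)) ⬝ᵥ ⇑(hA.eigenvectorBasis j)) = 0 := by
      intro j
      rw [sub_dotProduct, key j, sub_self]
    set w : EuclideanSpace ℝ (Fin m) :=
      WithLp.toLp 2 (Sᵀ *ᵥ ⇑(hA.eigenvectorBasis i) - Real.sqrt (hA.eigenvalues i) • ⇑(hA.eigenvectorBasis i) : Fin m → ℝ) with hwdef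
    have hw : ∀ j, ⟪hA.eigenvectorBasis j, w⟫ = 0 := by
      intro j
      rw [PiLp.inner_apply]
      have := hdiff j
      rw [dotProduct] at this
      simpa [mul_comm, hwdef] using this
    have hzero : w = 0 := by
      have hs := hA.eigenvectorBasis.sum_repr' w
      rw [← hs]
      simp [hw]
    have : Sᵀ *ᵥ ⇑(hA.eigenvectorBasis i)
        - Real.sqrt (hA.eigenvalues i) • ⇑(hA.eigenvectorBasis i) = (0 : Fin m → ℝ) := by
      have := congrFun (congrArg WithLp.ofLp hzero)
      funext k
      exact this k
    exact sub_eq_zero.mp this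
  have hall : ∀ x : Fin m → ℝ, Sᵀ *ᵥ x = S *ᵥ x := by
    have hsum : ∀ M : Matrix (Fin m) (Fin m) ℝ, ∀ f : Fin m → Fin m → ℝ,
        M *ᵥ (∑ i, f i) = ∑ i, M *ᵥ f i := fun M f => by
      exact map_sum M.mulVecLin f Finset.univ
    intro x
    have hx : (∑ i, hA.eigenvectorBasis.repr (WithLp.toLp 2 x) i • ⇑(hA.eigenvectorBasis i)) = x := by
      have := congrArg WithLp.ofLp (hA.eigenvectorBasis.sum_repr (WithLp.toLp 2 x : EuclideanSpace ℝ (Fin m)))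
      simp only [WithLp.ofLp_sum, WithLp.ofLp_smul] at this
      funext k
      exact congrFun this k
    calc Sᵀ *ᵥ x = Sᵀ *ᵥ (∑ i, hA.eigenvectorBasis.repr (WithLp.toLp 2 x) i • ⇑(hA.eigenvectorBasis i)) := by rw [hx]
      _ = ∑ i, hA.eigenvectorBasis.repr (WithLp.toLp 2 x) i • (Sᵀ *ᵥ ⇑(hA.eigenvectorBasis i)) := by
          rw [hsum]; simp [mulVec_smul]
      _ = ∑ i, hA.eigenvectorBasis.repr (WithLp.toLp 2 x) i • (S *ᵥ ⇑(hA.eigenvectorBasis i)) := by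
          simp only [hST, hS]
      _ = S *ᵥ (∑ i, hA.eigenvectorBasis.repr (WithLp.toLp 2 x) i • ⇑(hA.eigenvectorBasis i)) := by
          rw [hsum]; simp [mulVec_smul]
      _ = S *ᵥ x := by rw [hx]
  ext i j
  have := congrFun (hall (Pi.single j 1)) i
  simpa [mulVec_single] using this
end

section
/- For the Heisenberg system in ℝ³ with σ(x,y,z) having columns σ₁ = (1,0,y), σ₂ = (0,1,−x), and u(x,y,z) = (x²+y²+z²)/2: at points (0,0,z), the row vector ∇u σ vanishes, the 2×2 matrix S(0,0,z) = [[1, −z],[z, 1]], and at z = 1 the 4×4 matrix K(0,0,1) = [[1,0,1,1],[0,1,−1,1],[1,−1,1,0],[1,1,0,1]] has minimal eigenvalue 1 − √2 < 0 with eigenvector (−√2/2, √2/2, 1, 0). -/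
open Matrix

/-- The gradient of u : ℝⁿ → ℝ, as a vector. -/
noncomputable def gradv {n : ℕ} (u : (Fin n → ℝ) → ℝ) (x : Fin n → ℝ) :
    Fin n → ℝ :=
  fun i => fderiv ℝ u x (Pi.single i 1)

/-- The row vector ∇u σ, i.e. x ↦ σ(x)ᵀ ∇u(x) ∈ ℝᵐ. -/
noncomputable def gradSigma {n m : ℕ} (σ : (Fin n → ℝ) → Matrix (Fin n) (Fin m) ℝ)
    (u : (Fin n → ℝ) → ℝ) (x : Fin n → ℝ) : Fin m → ℝ :=
  (σ x)ᵀ *ᵥ gradv u x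

/-- The m×n Jacobian of x ↦ σ(x)ᵀ ∇u(x). -/
noncomputable def jacGradSigma {n m : ℕ} (σ : (Fin n → ℝ) → Matrix (Fin n) (Fin m) ℝ)
    (u : (Fin n → ℝ) → ℝ) (x : Fin n → ℝ) : Matrix (Fin m) (Fin n) ℝ :=
  Matrix.of fun i k => fderiv ℝ (fun y => gradSigma σ u y i) x (Pi.single k 1)

/-- The matrix S(x) = σ(x)ᵀ (D(∇u σ)(x))ᵀ. -/
noncomputable def Smat {n m : ℕ} (σ : (Fin n → ℝ) → Matrix (Fin n) (Fin m) ℝ)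
    (u : (Fin n → ℝ) → ℝ) (x : Fin n → ℝ) : Matrix (Fin m) (Fin m) ℝ :=
  (σ x)ᵀ * (jacGradSigma σ u x)ᵀ

/-- The Heisenberg system: columns σ₁ = (1,0,y), σ₂ = (0,1,−x). -/
noncomputable def sigHeis : (Fin 3 → ℝ) → Matrix (Fin 3) (Fin 2) ℝ :=
  fun p => !![1, 0; 0, 1; p 1, -(p 0)]

/-- u(x,y,z) = (x² + y² + z²)/2. -/
noncomputable def uHeis : (Fin 3 → ℝ) → ℝ :=
  fun p => (p 0 ^ 2 + p 1 ^ 2 + p 2 ^ 2) / 2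

lemma hasF_u (x : Fin 3 → ℝ) :
    HasFDerivAt uHeis
      (x 0 • ContinuousLinearMap.proj 0 + x 1 • ContinuousLinearMap.proj 1
        + x 2 • ContinuousLinearMap.proj 2 : (Fin 3 → ℝ) →L[ℝ] ℝ) x := by
  have h0 : HasFDerivAt (fun p : Fin 3 → ℝ => p 0)
      (ContinuousLinearMap.proj 0 : (Fin 3 → ℝ) →L[ℝ] ℝ) x :=
    hasFDerivAt_apply 0 x
  have h1 : HasFDerivAt (fun p : Fin 3 → ℝ => p 1)
      (ContinuousLinearMap.proj 1 : (Fin 3 → ℝ) →L[ℝ] ℝ) x :=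
    hasFDerivAt_apply 1 x
  have h2 : HasFDerivAt (fun p : Fin 3 → ℝ => p 2)
      (ContinuousLinearMap.proj 2 : (Fin 3 → ℝ) →L[ℝ] ℝ) x :=
    hasFDerivAt_apply 2 x
  have hf : uHeis = fun p : Fin 3 → ℝ => (1/2 : ℝ) • (p 0 * p 0 + (p 1 * p 1 + p 2 * p 2)) := by
    funext p; simp [uHeis, smul_eq_mul]; ring
  rw [hf]
  have := (((h0.mul h0).add ((h1.mul h1).add (h2.mul h2))).const_smul ((1:ℝ)/2))
  refine this.congr_fderiv ?_
  ext v
  simp [ContinuousLinearMap.proj]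
  ring

lemma grad_u (x : Fin 3 → ℝ) : gradv uHeis x = x := by
  funext i
  simp only [gradv, (hasF_u x).fderiv]
  fin_cases i <;>
    simp [ContinuousLinearMap.proj, Pi.single_apply]

lemma gradSigma_eq (y : Fin 3 → ℝ) :
    gradSigma sigHeis uHeis y = ![y 0 + y 2 * y 1, y 1 - y 2 * y 0] := by
  funext i
  fin_cases i <;>
    simp [gradSigma, sigHeis, grad_u, Matrix.mulVec, dotProduct,
      Fin.sum_univ_three] <;> ring

lemma jac_eq (x : Fin 3 → ℝ) :
    jacGradSigma sigHeis uHeis x = !![1, x 2, x 1; -(x 2), 1, -(x 0)] := by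
  have h0 : HasFDerivAt (fun p : Fin 3 → ℝ => p 0)
      (ContinuousLinearMap.proj 0 : (Fin 3 → ℝ) →L[ℝ] ℝ) x := hasFDerivAt_apply 0 x
  have h1 : HasFDerivAt (fun p : Fin 3 → ℝ => p 1)
      (ContinuousLinearMap.proj 1 : (Fin 3 → ℝ) →L[ℝ] ℝ) x := hasFDerivAt_apply 1 x
  have h2 : HasFDerivAt (fun p : Fin 3 → ℝ => p 2)
      (ContinuousLinearMap.proj 2 : (Fin 3 → ℝ) →L[ℝ] ℝ) x := hasFDerivAt_apply 2 x
  have hg0 : (fun y => gradSigma sigHeis uHeis y 0)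
      = fun y : Fin 3 → ℝ => y 0 + y 2 * y 1 := by
    funext y; rw [gradSigma_eq]; simp
  have hg1 : (fun y => gradSigma sigHeis uHeis y 1)
      = fun y : Fin 3 → ℝ => y 1 - y 2 * y 0 := by
    funext y; rw [gradSigma_eq]; simp
  have hd0 : HasFDerivAt (fun y : Fin 3 → ℝ => y 0 + y 2 * y 1)
      (ContinuousLinearMap.proj 0 + (x 2 • ContinuousLinearMap.proj 1
        + x 1 • ContinuousLinearMap.proj 2) : (Fin 3 → ℝ) →L[ℝ] ℝ) x := by
    have := h0.add (h2.mul h1)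
    exact this
  have hd1 : HasFDerivAt (fun y : Fin 3 → ℝ => y 1 - y 2 * y 0)
      (ContinuousLinearMap.proj 1 - (x 2 • ContinuousLinearMap.proj 0
        + x 0 • ContinuousLinearMap.proj 2) : (Fin 3 → ℝ) →L[ℝ] ℝ) x := by
    have := h1.sub (h2.mul h0)
    exact this
  funext i k
  fin_cases i <;> fin_cases k <;>
    simp only [jacGradSigma, Matrix.of_apply, Fin.zero_eta, Fin.mk_one, Fin.isValue,
      hg0, hg1, hd0.fderiv, hd1.fderiv] <;>
    simp [ContinuousLinearMap.proj, Pi.single_apply]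

lemma Smat_eq (z : ℝ) : Smat sigHeis uHeis ![0, 0, z] = !![1, -z; z, 1] := by
  have hj := jac_eq ![0, 0, z]
  funext i j
  fin_cases i <;> fin_cases j <;>
    simp [Smat, Matrix.mul_apply, Matrix.transpose_apply, Matrix.vecHead, Matrix.vecTail, hj, sigHeis, Fin.sum_univ_three]

lemma Kmat_eq : Kmat (Smat sigHeis uHeis ![0, 0, 1]) =
    Matrix.fromBlocks !![1, 0; 0, 1] !![1, 1; -1, 1] !![1, -1; 1, 1]
      !![1, 0; 0, 1] := by
  rw [Smat_eq]
  funext i j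
  rcases i with i | i <;> rcases j with j | j <;> fin_cases i <;> fin_cases j <;>
    norm_num [Kmat, Matrix.fromBlocks, Matrix.transpose_apply, Matrix.vecHead, Matrix.vecTail]

lemma sqrt2_sq : Real.sqrt 2 * Real.sqrt 2 = 2 :=
  Real.mul_self_sqrt (by norm_num)

theorem stmt19 :
    (∀ z : ℝ, gradSigma sigHeis uHeis ![0, 0, z] = 0) ∧
    (∀ z : ℝ, Smat sigHeis uHeis ![0, 0, z] = !![1, -z; z, 1]) ∧
    Kmat (Smat sigHeis uHeis ![0, 0, 1]) =
      Matrix.fromBlocks !![1, 0; 0, 1] !![1, 1; -1, 1] !![1, -1; 1, 1]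
        !![1, 0; 0, 1] ∧
    Kmat (Smat sigHeis uHeis ![0, 0, 1]) *ᵥ
        Sum.elim ![-(Real.sqrt 2 / 2), Real.sqrt 2 / 2] ![1, 0] =
      (1 - Real.sqrt 2) •
        Sum.elim ![-(Real.sqrt 2 / 2), Real.sqrt 2 / 2] ![1, 0] ∧
    (1 - Real.sqrt 2 < 0) ∧
    (∀ lam : ℝ, (∃ v : Fin 2 ⊕ Fin 2 → ℝ, v ≠ 0 ∧
        Kmat (Smat sigHeis uHeis ![0, 0, 1]) *ᵥ v = lam • v) →
      1 - Real.sqrt 2 ≤ lam) := by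
  have hs2 : (1:ℝ) < Real.sqrt 2 := by
    nlinarith [sqrt2_sq, Real.sqrt_nonneg 2]
  refine ⟨?_, Smat_eq, Kmat_eq, ?_, by linarith, ?_⟩
  · intro z
    funext i
    fin_cases i <;> simp [gradSigma_eq]
  · rw [Kmat_eq]
    funext i
    rcases i with i | i <;> fin_cases i <;>
      simp [Matrix.mulVec, dotProduct, Fintype.sum_sum_type,
        Fin.sum_univ_two, Matrix.fromBlocks] <;>
      nlinarith [sqrt2_sq]
  · rintro lam ⟨v, hv0, hveq⟩
    rw [Kmat_eq] at hveq
    set a := v (Sum.inl 0) with ha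
    set b := v (Sum.inl 1) with hb
    set c := v (Sum.inr 0) with hc
    set d := v (Sum.inr 1) with hd
    have e1 := congrFun hveq (Sum.inl 0)
    have e2 := congrFun hveq (Sum.inl 1)
    have e3 := congrFun hveq (Sum.inr 0)
    have e4 := congrFun hveq (Sum.inr 1)
    simp [Matrix.mulVec, dotProduct, Fintype.sum_sum_type,
      Fin.sum_univ_two, Matrix.fromBlocks, ← ha, ← hb, ← hc, ← hd] at e1 e2 e3 e4
    -- e1 : a + (c + d) = lam * a, etc.
    have hmu : ((lam - 1) ^ 2 - 2) * a = 0 ∧ ((lam - 1) ^ 2 - 2) * b = 0 ∧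
        ((lam - 1) ^ 2 - 2) * c = 0 ∧ ((lam - 1) ^ 2 - 2) * d = 0 := by
      refine ⟨?_, ?_, ?_, ?_⟩
      · linear_combination (1 - lam) * e1 - e3 - e4
      · linear_combination (1 - lam) * e2 + e3 - e4
      · linear_combination (1 - lam) * e3 - e1 + e2
      · linear_combination (1 - lam) * e4 - e1 - e2
    have hne : a ≠ 0 ∨ b ≠ 0 ∨ c ≠ 0 ∨ d ≠ 0 := by
      by_contra h
      push_neg at h
      apply hv0
      funext i
      rcases i with i | i <;> fin_cases i <;> simp_all
    have hsq : (lam - 1) ^ 2 = 2 := by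
      rcases hne with h | h | h | h
      · have := hmu.1; rcases mul_eq_zero.1 this with h' | h' <;> [linarith [h']; exact absurd h' h]
      · have := hmu.2.1; rcases mul_eq_zero.1 this with h' | h' <;> [linarith [h']; exact absurd h' h]
      · have := hmu.2.2.1; rcases mul_eq_zero.1 this with h' | h' <;> [linarith [h']; exact absurd h' h]
      · have := hmu.2.2.2; rcases mul_eq_zero.1 this with h' | h' <;> [linarith [h']; exact absurd h' h]
    nlinarith [sqrt2_sq, sq_nonneg (lam - 1 + Real.sqrt 2), Real.sqrt_nonneg 2]
end
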